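/- Consider the inviscid discrete system b_k'(t) = −b_k(t)² + 2 b_{k-1}(t)² for k ≥ 1 with b_0 ≡ 0, with continuous nonnegative solutions on [T₁, T₂]. Fix k ≥ 2. If b_{k-1}(t) < √2 · b_{k-2}(t) for all t ∈ [T₁, T₂] and b_k(T₁) < √2 · b_{k-1}(T₁), then b_k(t) < √2 · b_{k-1}(t) for all t ∈ [T₁, T₂]. -/
import Mathlib

open Filter Topology

/-- Comparison lemma for the inviscid discrete system `b_k' = −b_k² + 2 b_{k-1}²`:
if `b_{k-1} < √2 b_{k-2}` on `[T₁, T₂]` and `b_k(T₁) < √2 b_{k-1}(T₁)`, then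
`b_k < √2 b_{k-1}` on all of `[T₁, T₂]`. -/
theorem stmt9 (T₁ T₂ : ℝ) (hT : T₁ ≤ T₂) (b : ℕ → ℝ → ℝ)
    (hb0 : ∀ t ∈ Set.Icc T₁ T₂, b 0 t = 0)
    (hderiv : ∀ j : ℕ, 1 ≤ j → ∀ t ∈ Set.Icc T₁ T₂,
      HasDerivAt (b j) (-(b j t)^2 + 2 * (b (j-1) t)^2) t)
    (hnonneg : ∀ j : ℕ, ∀ t ∈ Set.Icc T₁ T₂, 0 ≤ b j t)
    (k : ℕ) (hk : 2 ≤ k)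
    (hlow : ∀ t ∈ Set.Icc T₁ T₂, b (k-1) t < Real.sqrt 2 * b (k-2) t)
    (hinit : b k T₁ < Real.sqrt 2 * b (k-1) T₁) :
    ∀ t ∈ Set.Icc T₁ T₂, b k t < Real.sqrt 2 * b (k-1) t := by
  by_contra h
  push_neg at h
  set f : ℝ → ℝ := fun t => Real.sqrt 2 * b (k-1) t - b k t with hfdef
  have hk1 : 1 ≤ k - 1 := by omega
  have hk11 : k - 1 - 1 = k - 2 := by omega
  have hfderiv : ∀ t ∈ Set.Icc T₁ T₂, HasDerivAt f
      (Real.sqrt 2 * (-(b (k-1) t)^2 + 2 * (b (k-2) t)^2)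
        - (-(b k t)^2 + 2 * (b (k-1) t)^2)) t := by
    intro t ht
    have h1 := hderiv (k-1) hk1 t ht
    rw [hk11] at h1
    exact (h1.const_mul _).sub (hderiv k (by omega) t ht)
  have hcont : ContinuousOn f (Set.Icc T₁ T₂) := fun t ht =>
    (hfderiv t ht).continuousAt.continuousWithinAt
  set S := Set.Icc T₁ T₂ ∩ f ⁻¹' Set.Iic 0 with hSdef
  have hSclosed : IsClosed S :=
    hcont.preimage_isClosed_of_isClosed isClosed_Icc isClosed_Iic
  have hSne : S.Nonempty := by
    obtain ⟨t, ht, hle⟩ := h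
    exact ⟨t, ht, by simp only [Set.mem_preimage, Set.mem_Iic, hfdef]; linarith⟩
  have hSbdd : BddBelow S := ⟨T₁, fun t ht => ht.1.1⟩
  set t₀ := sInf S with ht₀def
  have ht₀S : t₀ ∈ S := hSclosed.csInf_mem hSne hSbdd
  obtain ⟨ht₀Icc, ht₀le⟩ := ht₀S
  simp only [Set.mem_preimage, Set.mem_Iic] at ht₀le
  have hfT₁ : 0 < f T₁ := by simp only [hfdef]; linarith
  have hT₁lt : T₁ < t₀ := by
    rcases lt_or_eq_of_le ht₀Icc.1 with h' | h'
    · exact h'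
    · exact absurd ht₀le (by rw [← h']; linarith)
  -- positivity of f strictly before t₀
  have hpos : ∀ t, T₁ ≤ t → t < t₀ → 0 < f t := by
    intro t h1 h2
    by_contra hle
    push_neg at hle
    have : t ∈ S := ⟨⟨h1, le_trans h2.le ht₀Icc.2⟩, by simpa using hle⟩
    exact absurd (csInf_le hSbdd this) (not_le.mpr h2)
  -- the derivative of f at t₀ is positive
  have hs2 : (0:ℝ) < Real.sqrt 2 := Real.sqrt_pos.mpr (by norm_num)
  have hs2sq : Real.sqrt 2 ^ 2 = 2 := Real.sq_sqrt (by norm_num)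
  have hb1 : 0 ≤ b (k-1) t₀ := hnonneg _ t₀ ht₀Icc
  have hb2 : 0 ≤ b (k-2) t₀ := hnonneg _ t₀ ht₀Icc
  have hlt : b (k-1) t₀ < Real.sqrt 2 * b (k-2) t₀ := hlow t₀ ht₀Icc
  have hge : Real.sqrt 2 * b (k-1) t₀ ≤ b k t₀ := by
    simp only [hfdef] at ht₀le; linarith
  have hdpos : 0 < Real.sqrt 2 * (-(b (k-1) t₀)^2 + 2 * (b (k-2) t₀)^2)
      - (-(b k t₀)^2 + 2 * (b (k-1) t₀)^2) := by
    have h1 : (b (k-1) t₀)^2 < 2 * (b (k-2) t₀)^2 := by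
      nlinarith
    have h2 : 2 * (b (k-1) t₀)^2 ≤ (b k t₀)^2 := by
      nlinarith [mul_nonneg hs2.le hb1]
    nlinarith
  -- contradiction via the slope from the left at t₀
  have hd : HasDerivWithinAt f _ (Set.Iio t₀) t₀ := (hfderiv t₀ ht₀Icc).hasDerivWithinAt
  rw [hasDerivWithinAt_iff_tendsto_slope] at hd
  have hdiff : Set.Iio t₀ \ {t₀} = Set.Iio t₀ :=
    Set.diff_singleton_eq_self (by simp)
  rw [hdiff] at hd
  have hne : (𝓝[Set.Iio t₀] t₀).NeBot := nhdsLT_neBot t₀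
  have hev1 : ∀ᶠ t in 𝓝[Set.Iio t₀] t₀, 0 < slope f t₀ t :=
    hd.eventually (eventually_gt_nhds hdpos)
  have hev2 : ∀ᶠ t in 𝓝[Set.Iio t₀] t₀, T₁ < t :=
    eventually_nhdsWithin_of_eventually_nhds
      (eventually_gt_nhds hT₁lt)
  have hev3 : ∀ᶠ t in 𝓝[Set.Iio t₀] t₀, t ∈ Set.Iio t₀ :=
    eventually_mem_nhdsWithin
  obtain ⟨t, hslope, hT₁t, htlt⟩ := (hev1.and (hev2.and hev3)).exists
  have htlt' : t < t₀ := htlt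
  have hft : 0 < f t := hpos t hT₁t.le htlt'
  rw [slope_def_field] at hslope
  have hdenom : t - t₀ < 0 := sub_neg.mpr htlt'
  rcases div_pos_iff.mp hslope with ⟨h1, h2⟩ | ⟨h1, h2⟩
  · linarith
  · linarith
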